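/- Let G be a finite solvable group with a minimal normal subgroup N such that N = O_p(G) = F(G) = C_G(N) for a prime p, and suppose G = NK for a subgroup K with N ∩ K = 1 and K ≠ 1. Then there exists a prime q ≠ p with O_q(K) ≠ 1 such that C_N(O_q(K)) = 1, and for every Sylow q-subgroup Q of K one has N ∩ N_G(Q) = 1 and |G : N_G(Q)| = |N| · |G : N·N_G(Q)|; in particular |N| divides |G : N_G(Q)|, so that if |N| = p^n then n ≤ τ(G). -/

import Mathlib

open Subgroup Pointwise

/-- `τ(n)`: the maximum of the exponents occurring in the prime factorization of `n`
(with `τ(1) = 0`). -/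
def tauNat (n : ℕ) : ℕ := n.factorization.support.sup n.factorization

/-- The Sylow `q`-number of `G`, i.e. the number of Sylow `q`-subgroups. -/
noncomputable def sylowNumber (q : ℕ) (G : Type*) [Group G] : ℕ := Nat.card (Sylow q G)

/-- `τ(G) = max { τ(n_q(G)) : q ∈ π(G) }`. -/
noncomputable def tauGroup (G : Type*) [Group G] : ℕ :=
  (Nat.card G).primeFactors.sup fun q => tauNat (sylowNumber q G)

/-- `O_p(G)`: the largest normal `p`-subgroup of `G`. -/
def pCoreSub (p : ℕ) (G : Type*) [Group G] : Subgroup G :=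
  sSup {H : Subgroup G | H.Normal ∧ IsPGroup p H}

/-- `F(G)`: the Fitting subgroup, the largest normal nilpotent subgroup of `G`. -/
def fitting (G : Type*) [Group G] : Subgroup G :=
  sSup {H : Subgroup G | H.Normal ∧ Group.IsNilpotent H}

section Aux

variable {G : Type*} [Group G]

private lemma aux_normal_sSup {S : Set (Subgroup G)} (h : ∀ H ∈ S, H.Normal) :
    (sSup S).Normal := by
  constructor
  intro x hx g
  rw [sSup_eq_iSup'] at hx ⊢
  refine Subgroup.iSup_induction (C := fun y => g * y * g⁻¹ ∈ ⨆ H : S, (H : Subgroup G))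
    (fun H : S => (H : Subgroup G)) hx
    (fun H y hy => Subgroup.mem_iSup_of_mem H ((h H H.2).conj_mem y hy g))
    (by simpa using one_mem _) ?_
  intro y z hy hz
  rw [show g * (y * z) * g⁻¹ = (g * y * g⁻¹) * (g * z * g⁻¹) by group]
  exact mul_mem hy hz

private lemma aux_card_sup {N H : Subgroup G} [Finite G] [hN : N.Normal]
    (h : N ⊓ H = ⊥) : Nat.card ↥(H ⊔ N) = Nat.card H * Nat.card N := by
  have h1 : N.subgroupOf H = ⊥ := Subgroup.subgroupOf_eq_bot.mpr (disjoint_iff.mpr h)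
  have h2 := Subgroup.card_eq_card_quotient_mul_card_subgroup (N.subgroupOf (H ⊔ N))
  rw [h2, ← Nat.card_congr (QuotientGroup.quotientInfEquivProdNormalQuotient H N).toEquiv, h1,
    Nat.card_congr (QuotientGroup.quotientBot (G := H)).toEquiv,
    Nat.card_congr (Subgroup.subgroupOfEquivOfLe (le_sup_right : N ≤ H ⊔ N)).toEquiv]

private lemma aux_conj_map {K : Subgroup G} {A : Subgroup ↥K} (hA : A.Normal) :
    ∀ k ∈ K, ∀ h ∈ A.map K.subtype, k * h * k⁻¹ ∈ A.map K.subtype := by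
  intro k hk h hh
  obtain ⟨h', hh', rfl⟩ := hh
  exact ⟨⟨k, hk⟩ * h' * ⟨k, hk⟩⁻¹, hA.conj_mem h' hh' ⟨k, hk⟩, rfl⟩

private lemma aux_top_ne_bot {H : Type*} [Group H] [Nontrivial H] : (⊤ : Subgroup H) ≠ ⊥ := by
  obtain ⟨x, hx⟩ := exists_ne (1 : H)
  intro h
  exact hx (Subgroup.mem_bot.mp (h ▸ Subgroup.mem_top x))

private lemma aux_finite_sylow (p : ℕ) [Finite G] : Finite (Sylow p G) :=
  Finite.of_injective (fun P : Sylow p G => (P : Subgroup G)) fun _ _ h => Sylow.ext h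

end Aux

/-- Let `G` be a finite solvable group with a minimal normal subgroup `N` such that
`N = O_p(G) = F(G) = C_G(N)` for a prime `p`, and suppose `G = NK` with `N ∩ K = 1`
and `K ≠ 1`.  Then there is a prime `q ≠ p` with `O_q(K) ≠ 1` and `C_N(O_q(K)) = 1`,
and for every Sylow `q`-subgroup `Q` of `K` one has `N ∩ N_G(Q) = 1` and
`|G : N_G(Q)| = |N|·|G : N·N_G(Q)|`; in particular `|N|` divides `|G : N_G(Q)|`, so
that if `|N| = p^n` then `n ≤ τ(G)`. -/
theorem exists_prime_card_dvd_index_normalizer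
    {G : Type*} [Group G] [Finite G] (hG : IsSolvable G) (p : ℕ) (hp : p.Prime)
    (N : Subgroup G) (hN : N.Normal) (hNbot : N ≠ ⊥)
    (hmin : ∀ M : Subgroup G, M.Normal → M ≤ N → M = ⊥ ∨ M = N)
    (hOp : N = pCoreSub p G) (hF : N = fitting G)
    (hC : N = Subgroup.centralizer (N : Set G))
    (K : Subgroup G) (hGNK : (N : Set G) * (K : Set G) = Set.univ)
    (hNK : N ⊓ K = ⊥) (hK : K ≠ ⊥) :
    ∃ q : ℕ, q.Prime ∧ q ≠ p ∧ pCoreSub q K ≠ ⊥ ∧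
      N ⊓ Subgroup.centralizer (((pCoreSub q K).map K.subtype : Subgroup G) : Set G) = ⊥ ∧
      ∀ Q : Sylow q K,
        N ⊓ (Subgroup.normalizer (((Q : Subgroup K).map K.subtype : Subgroup G) : Set G)) = ⊥ ∧
        (Subgroup.normalizer (((Q : Subgroup K).map K.subtype : Subgroup G) : Set G)).index =
          Nat.card N * (N ⊔ (Subgroup.normalizer (((Q : Subgroup K).map K.subtype : Subgroup G) : Set G))).index ∧
        Nat.card N ∣ (Subgroup.normalizer (((Q : Subgroup K).map K.subtype : Subgroup G) : Set G)).index ∧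
        ∀ n : ℕ, Nat.card N = p ^ n → n ≤ tauGroup G := by
  classical
  haveI : Group.IsSolvable G := hG
  haveI := hN
  -- decomposition G = N K
  have hdecomp : ∀ g : G, ∃ n ∈ N, ∃ k ∈ K, n * k = g := by
    intro g
    have hg : g ∈ (N : Set G) * (K : Set G) := by rw [hGNK]; trivial
    exact Set.mem_mul.mp hg
  have hTop : N ⊔ K = ⊤ := by
    rw [eq_top_iff]
    intro g _
    obtain ⟨n, hn, k, hk, rfl⟩ := hdecomp g
    exact mul_mem (Subgroup.mem_sup_left hn) (Subgroup.mem_sup_right hk)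
  -- normality criterion
  have key : ∀ W : Subgroup G, (∀ n ∈ N, ∀ w ∈ W, n * w * n⁻¹ ∈ W) →
      (∀ k ∈ K, ∀ w ∈ W, k * w * k⁻¹ ∈ W) → W.Normal := by
    intro W h1 h2
    rw [← Subgroup.normalizer_eq_top_iff, eq_top_iff, ← hTop, sup_le_iff]
    have mem_norm : ∀ (g : G), (∀ u : G, ∀ w ∈ W, u ∈ ({g, g⁻¹} : Set G) → u * w * u⁻¹ ∈ W) →
        g ∈ Subgroup.normalizer (W : Set G) := by
      intro g hg
      rw [Subgroup.mem_normalizer_iff]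
      intro w
      refine ⟨fun hw => hg g w hw (by simp), fun hw => ?_⟩
      have := hg g⁻¹ _ hw (by simp)
      rw [show g⁻¹ * (g * w * g⁻¹) * g⁻¹⁻¹ = w by group] at this
      exact this
    constructor
    · intro n hn
      refine mem_norm n fun u w hw hu => ?_
      rcases hu with rfl | rfl
      · exact h1 u hn w hw
      · exact h1 _ (inv_mem hn) w hw
    · intro k hk
      refine mem_norm k fun u w hw hu => ?_
      rcases hu with rfl | rfl
      · exact h2 u hk w hw
      · exact h2 _ (inv_mem hk) w hw
  -- N is a p-group
  have hNp : IsPGroup p ↥N := by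
    obtain ⟨H0, ⟨hH0n, hH0p⟩, hH0ne⟩ :
        ∃ H ∈ {H : Subgroup G | H.Normal ∧ IsPGroup p ↥H}, H ≠ ⊥ := by
      by_contra h
      push_neg at h
      exact hNbot (by
        rw [hOp, pCoreSub]
        exact le_bot_iff.mp (sSup_le fun H hH => (h H hH).le))
    have hH0N : H0 ≤ N := by rw [hOp]; exact le_sSup ⟨hH0n, hH0p⟩
    rcases hmin H0 hH0n hH0N with h | h
    · exact absurd h hH0ne
    · rwa [h] at hH0p
  -- N is abelian
  have hNab : ∀ a ∈ N, ∀ b ∈ N, b * a = a * b := by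
    intro a ha b hb
    have ha' : a ∈ Subgroup.centralizer (N : Set G) := by rw [← hC]; exact ha
    exact Subgroup.mem_centralizer_iff.mp ha' b hb
  -- Step A : nontrivial K-invariant p-subgroups of K don't exist
  have stepA : ∀ H : Subgroup G, H ≤ K → (∀ k ∈ K, ∀ h ∈ H, k * h * k⁻¹ ∈ H) →
      IsPGroup p ↥H → H = ⊥ := by
    intro H hHK hHconj hHp
    have hLp : IsPGroup p ↥(N ⊔ H) := IsPGroup.to_sup_of_normal_left hNp hHp
    have hmul : (↑(N ⊔ H) : Set G) = ↑N * ↑H := Subgroup.normal_mul N H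
    have hLnormal : (N ⊔ H).Normal := by
      apply key
      · intro n hn w hw
        exact mul_mem (mul_mem (Subgroup.mem_sup_left hn) hw)
          (inv_mem (Subgroup.mem_sup_left hn))
      · intro k hk w hw
        have hw' : w ∈ (↑N * ↑H : Set G) := by rw [← hmul]; exact hw
        obtain ⟨n, hn, h, hh, rfl⟩ := Set.mem_mul.mp hw'
        rw [show k * (n * h) * k⁻¹ = (k * n * k⁻¹) * (k * h * k⁻¹) by group]
        exact mul_mem (Subgroup.mem_sup_left (hN.conj_mem n hn k))
          (Subgroup.mem_sup_right (hHconj k hk h hh))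
    have hLN : N ⊔ H ≤ N :=
      (le_sSup ⟨hLnormal, hLp⟩ : N ⊔ H ≤ pCoreSub p G).trans (le_of_eq hOp.symm)
    have hle : H ≤ N ⊓ K := le_inf (le_sup_right.trans hLN) hHK
    rw [hNK] at hle
    exact le_bot_iff.mp hle
  -- minimal normal subgroup of K
  haveI : Nontrivial ↥K := (Subgroup.nontrivial_iff_ne_bot K).mpr hK
  obtain ⟨M, ⟨hMn, hMbot⟩, hMmin⟩ := (wellFounded_lt (α := Subgroup ↥K)).has_min
    {A : Subgroup ↥K | A.Normal ∧ A ≠ ⊥} ⟨⊤, inferInstance, aux_top_ne_bot⟩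
  haveI := hMn
  haveI : Nontrivial ↥M := (Subgroup.nontrivial_iff_ne_bot M).mpr hMbot
  -- M is abelian
  have hMMne : ⁅M, M⁆ ≠ M := by
    intro hcomm
    have hmt : (⊤ : Subgroup ↥M).map M.subtype = M := by
      rw [← MonoidHom.range_eq_map, Subgroup.range_subtype]
    have htop : commutator ↥M = ⊤ := by
      apply Subgroup.map_injective (Subgroup.subtype_injective M)
      rw [_root_.commutator_def, Subgroup.map_commutator, hmt]
      exact hcomm
    have hall : ∀ m, derivedSeries ↥M m = ⊤ := by
      intro m
      induction m with
      | zero => exact derivedSeries_zero ↥M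
      | succ m ih => rw [derivedSeries_succ, ih, ← _root_.commutator_def]; exact htop
    obtain ⟨m, hm⟩ := (inferInstance : Group.IsSolvable ↥M).solvable
    rw [hall m] at hm
    exact aux_top_ne_bot hm
  have hMMbot : ⁅M, M⁆ = ⊥ := by
    by_contra hne
    exact hMmin ⁅M, M⁆ ⟨inferInstance, hne⟩
      (lt_of_le_of_ne (Subgroup.commutator_le_left M M) hMMne)
  have hMab : ∀ a b : ↥K, a ∈ M → b ∈ M → a * b = b * a := by
    have hcen := Subgroup.commutator_eq_bot_iff_le_centralizer.mp hMMbot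
    intro a b ha hb
    exact (Subgroup.mem_centralizer_iff.mp (hcen ha) b hb).symm
  -- a prime q dividing |M|
  have hMcard : Nat.card ↥M ≠ 1 := ((Subgroup.one_lt_card_iff_ne_bot M).mpr hMbot).ne'
  obtain ⟨q, hq, hqdvd⟩ := Nat.exists_prime_and_dvd hMcard
  haveI := Fact.mk hq
  -- the Sylow q-subgroup of M, mapped into K
  set P : Sylow q ↥M := default with hPdef
  have hPn : (P : Subgroup ↥M).Normal := by
    constructor
    intro x hx g
    have h1 : ((g * x * g⁻¹ : ↥M) : ↥K) = (x : ↥K) := by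
      push_cast
      rw [hMab _ _ g.2 x.2]
      group
    rw [show g * x * g⁻¹ = x from Subtype.ext h1]
    exact hx
  have hchar := Sylow.characteristic_of_normal P hPn
  set P' : Subgroup ↥K := (P : Subgroup ↥M).map M.subtype with hP'def
  haveI hP'normal : P'.Normal := inferInstance
  have hP'bot : P' ≠ ⊥ := by
    have hcards : Nat.card ↥(P : Subgroup ↥M) = q ^ (Nat.card ↥M).factorization q :=
      Sylow.card_eq_multiplicity P
    have hPne : (P : Subgroup ↥M) ≠ ⊥ := by
      rw [← Subgroup.one_lt_card_iff_ne_bot, hcards]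
      exact Nat.one_lt_pow
        (Nat.Prime.factorization_pos_of_dvd hq Nat.card_pos.ne' hqdvd).ne' hq.one_lt
    intro h
    exact hPne ((Subgroup.map_eq_bot_iff_of_injective _ (Subgroup.subtype_injective M)).mp h)
  have hP'q : IsPGroup q ↥P' := P.2.map M.subtype
  have hP'core : P' ≤ pCoreSub q ↥K := le_sSup ⟨hP'normal, hP'q⟩
  have hcore_ne : pCoreSub q ↥K ≠ ⊥ := fun h => hP'bot (le_bot_iff.mp (h ▸ hP'core))
  -- q ≠ p
  have hqp : q ≠ p := by
    intro hqp; subst hqp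
    have h1 : P'.map K.subtype ≤ K := Subgroup.map_subtype_le P'
    have h2 := aux_conj_map hP'normal
    have h3 : IsPGroup q ↥(P'.map K.subtype) := hP'q.map K.subtype
    have h4 := stepA (P'.map K.subtype) h1 h2 h3
    exact hP'bot ((Subgroup.map_eq_bot_iff_of_injective _ (Subgroup.subtype_injective K)).mp h4)
  -- the mapped core
  set M' : Subgroup G := (pCoreSub q ↥K).map K.subtype with hM'def
  have hM'K : M' ≤ K := Subgroup.map_subtype_le _
  have hcoren : (pCoreSub q ↥K).Normal := aux_normal_sSup fun A hA => hA.1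
  have hM'conj : ∀ k ∈ K, ∀ h ∈ M', k * h * k⁻¹ ∈ M' := aux_conj_map hcoren
  have hM'ne : M' ≠ ⊥ := fun h =>
    hcore_ne ((Subgroup.map_eq_bot_iff_of_injective _ (Subgroup.subtype_injective K)).mp h)
  -- Step C : C_N(M') = 1
  have hCbot : N ⊓ Subgroup.centralizer (M' : Set G) = ⊥ := by
    have hWn : (N ⊓ Subgroup.centralizer (M' : Set G)).Normal := by
      apply key
      · intro n hn w hw
        rw [show n * w * n⁻¹ = w by rw [hNab w (Subgroup.mem_inf.mp hw).1 n hn]; group]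
        exact hw
      · intro k hk w hw
        obtain ⟨hwN, hwC⟩ := Subgroup.mem_inf.mp hw
        refine Subgroup.mem_inf.mpr ⟨hN.conj_mem w hwN k, ?_⟩
        rw [Subgroup.mem_centralizer_iff]
        intro m hm
        have hm' : k⁻¹ * m * k ∈ M' := by
          have := hM'conj k⁻¹ (inv_mem hk) m hm
          rwa [inv_inv] at this
        have hcw : (k⁻¹ * m * k) * w = w * (k⁻¹ * m * k) :=
          Subgroup.mem_centralizer_iff.mp hwC _ hm'
        calc m * (k * w * k⁻¹) = k * ((k⁻¹ * m * k) * w) * k⁻¹ := by group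
          _ = k * (w * (k⁻¹ * m * k)) * k⁻¹ := by rw [hcw]
          _ = (k * w * k⁻¹) * m := by group
    rcases hmin _ hWn inf_le_left with h | h
    · exact h
    · exfalso
      have hNC : N ≤ Subgroup.centralizer (M' : Set G) := h ▸ inf_le_right
      have hM'N : M' ≤ N := by
        rw [hC]
        intro m hm
        rw [Subgroup.mem_centralizer_iff]
        intro b hb
        exact (Subgroup.mem_centralizer_iff.mp (hNC hb) m hm).symm
      have hle : M' ≤ N ⊓ K := le_inf hM'N hM'K
      rw [hNK] at hle
      exact hM'ne (le_bot_iff.mp hle)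
  refine ⟨q, hq, hqp, hcore_ne, hCbot, ?_⟩
  intro Q
  haveI : Finite (Sylow q ↥K) := aux_finite_sylow q
  set Q' : Subgroup G := (Q : Subgroup ↥K).map K.subtype with hQ'def
  have hQ'K : Q' ≤ K := Subgroup.map_subtype_le _
  -- the core is contained in every Sylow
  have hcoreQ : pCoreSub q ↥K ≤ (Q : Subgroup ↥K) := by
    refine sSup_le ?_
    rintro A ⟨hAn, hAq⟩
    haveI := hAn
    obtain ⟨R, hR⟩ := hAq.exists_le_sylow
    obtain ⟨g, rfl⟩ := MulAction.exists_smul_eq ↥K R Q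
    calc A = MulAut.conj g • A := (Subgroup.Normal.conj_smul_eq_self g A).symm
      _ ≤ MulAut.conj g • (R : Subgroup ↥K) :=
          Subgroup.pointwise_smul_le_pointwise_smul_iff.mpr hR
      _ = ((g • R : Sylow q ↥K) : Subgroup ↥K) := Sylow.coe_subgroup_smul.symm
  have hM'Q' : M' ≤ Q' := Subgroup.map_mono hcoreQ
  -- part 1 : N ⊓ N_G(Q') = ⊥
  have hd1 : N ⊓ Subgroup.normalizer (Q' : Set G) = ⊥ := by
    rw [eq_bot_iff, ← hCbot]
    intro x hx
    obtain ⟨hxN, hxn⟩ := Subgroup.mem_inf.mp hx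
    refine Subgroup.mem_inf.mpr ⟨hxN, ?_⟩
    have hxcent : x ∈ Subgroup.centralizer (Q' : Set G) := by
      rw [Subgroup.mem_centralizer_iff]
      intro m hm
      have h1 : x⁻¹ * m * x ∈ Q' := by
        have := (Subgroup.mem_normalizer_iff.mp (inv_mem hxn) m).mp hm
        rwa [inv_inv] at this
      have hc1 : m⁻¹ * (x⁻¹ * m * x) ∈ Q' := mul_mem (inv_mem hm) h1
      have hc2 : m⁻¹ * (x⁻¹ * m * x) ∈ N := by
        have hn1 : m⁻¹ * x⁻¹ * m ∈ N := by
          have := hN.conj_mem x⁻¹ (inv_mem hxN) m⁻¹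
          rwa [inv_inv] at this
        rw [show m⁻¹ * (x⁻¹ * m * x) = (m⁻¹ * x⁻¹ * m) * x by group]
        exact mul_mem hn1 hxN
      have hc : m⁻¹ * (x⁻¹ * m * x) = 1 := by
        have hmem : m⁻¹ * (x⁻¹ * m * x) ∈ N ⊓ K := ⟨hc2, hQ'K hc1⟩
        rw [hNK] at hmem
        exact Subgroup.mem_bot.mp hmem
      have hxm : x⁻¹ * m * x = m := (inv_mul_eq_one.mp hc).symm
      calc m * x = x * (x⁻¹ * m * x) := by group
        _ = x * m := by rw [hxm]
    exact Subgroup.centralizer_le (SetLike.coe_subset_coe.mpr hM'Q') hxcent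
  -- part 2 : index formula
  have hd2 : (Subgroup.normalizer (Q' : Set G)).index = Nat.card N * (N ⊔ Subgroup.normalizer (Q' : Set G)).index := by
    set H := Subgroup.normalizer (Q' : Set G) with hHdef
    have hsup : Nat.card ↥(H ⊔ N) = Nat.card H * Nat.card N := aux_card_sup hd1
    have h1 : H.index * Nat.card H = Nat.card G := Subgroup.index_mul_card H
    have h2 : (H ⊔ N).index * Nat.card ↥(H ⊔ N) = Nat.card G := Subgroup.index_mul_card _
    have h3 : H.index * Nat.card H = (Nat.card N * (H ⊔ N).index) * Nat.card H := by
      rw [h1, ← h2, hsup]; ring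
    have h4 := Nat.eq_of_mul_eq_mul_right Nat.card_pos h3
    rw [sup_comm N H]
    exact h4
  refine ⟨hd1, hd2, ⟨_, hd2⟩, ?_⟩
  -- part 4 : n ≤ τ(G)
  intro n hn
  rcases Nat.eq_zero_or_pos n with rfl | hnpos
  · exact Nat.zero_le _
  have hQ'p : IsPGroup q ↥Q' := Q.2.map K.subtype
  obtain ⟨R, hQR⟩ := hQ'p.exists_le_sylow
  have hcardG : Nat.card G = Nat.card K * Nat.card N := by
    have := aux_card_sup (N := N) (H := K) hNK
    rw [sup_comm K N, hTop, Subgroup.card_top] at this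
    exact this
  have hfactG : (Nat.card G).factorization q = (Nat.card ↥K).factorization q := by
    have hNq : (Nat.card ↥N).factorization q = 0 := by
      rw [hn, Nat.factorization_pow, Nat.Prime.factorization hp]
      simp [Finsupp.single_apply, Ne.symm hqp]
    rw [hcardG, Nat.factorization_mul Nat.card_pos.ne' Nat.card_pos.ne',
      Finsupp.add_apply, hNq, add_zero]
  have hcardQ' : Nat.card ↥Q' = Nat.card ↥(Q : Subgroup ↥K) :=
    (Nat.card_congr (Subgroup.equivMapOfInjective _ _ (Subgroup.subtype_injective K)).toEquiv).symm
  have hQ'card : Nat.card ↥Q' = q ^ (Nat.card G).factorization q := by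
    rw [hcardQ', hfactG]
    exact Sylow.card_eq_multiplicity Q
  have hRQ' : Q' = (R : Subgroup G) := by
    refine Subgroup.eq_of_le_of_card_ge hQR (le_of_eq ?_)
    rw [Sylow.card_eq_multiplicity R, hQ'card]
  haveI : Finite (Sylow q G) := aux_finite_sylow q
  have hsylow : Nat.card (Sylow q G) = (Subgroup.normalizer (Q' : Set G)).index := by
    rw [Sylow.card_eq_index_normalizer R, hRQ']; rfl
  have hqG : q ∈ (Nat.card G).primeFactors := by
    rw [Nat.mem_primeFactors]
    refine ⟨hq, ?_, Nat.card_pos.ne'⟩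
    have hQ'ne : Q' ≠ ⊥ := fun h => hM'ne (le_bot_iff.mp (h ▸ hM'Q'))
    have h1lt : 1 < Nat.card ↥Q' := (Subgroup.one_lt_card_iff_ne_bot Q').mpr hQ'ne
    have hqd : q ∣ Nat.card ↥Q' := by
      rw [hQ'card] at h1lt ⊢
      refine dvd_pow_self q fun h0 => ?_
      rw [h0, pow_zero] at h1lt
      omega
    exact hqd.trans (Subgroup.card_subgroup_dvd_card Q')
  have hdvd' : p ^ n ∣ sylowNumber q G := by
    rw [sylowNumber, hsylow, ← hn]
    exact ⟨_, hd2⟩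
  have hne0 : sylowNumber q G ≠ 0 := by
    rw [sylowNumber, hsylow]
    exact Subgroup.index_ne_zero_of_finite
  have hle1 : n ≤ (sylowNumber q G).factorization p :=
    (Nat.Prime.pow_dvd_iff_le_factorization hp hne0).mp hdvd'
  have hle2 : (sylowNumber q G).factorization p ≤ tauNat (sylowNumber q G) := by
    by_cases h0 : (sylowNumber q G).factorization p = 0
    · simp [h0]
    · exact Finset.le_sup (Finsupp.mem_support_iff.mpr h0)
  have hle3 : tauNat (sylowNumber q G) ≤ tauGroup G :=
    Finset.le_sup (f := fun r => tauNat (sylowNumber r G)) hqG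
  omega
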